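/- For β ∈ (1,2), the Beta(2-β, β)-coalescent satisfies Condition A with α = β - 1: there exists a constant C > 0 such that m^{β-1} Σ_{b=m+1}^{∞} 1/λ_b ≤ C for all large m, where λ_b is the total coalescence rate of the Beta(2-β,β)-coalescent. -/

import Mathlib

open MeasureTheory

/-- The coalescence rate `λ_{b,k} = ∫_{[0,1]} x^{k-2}(1-x)^{b-k} Λ(dx)`. -/
noncomputable def coalRate (Λ : Measure ℝ) (b k : ℕ) : ℝ :=
  ∫ x in Set.Icc (0:ℝ) 1, x ^ (k - 2) * (1 - x) ^ (b - k) ∂Λ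

/-- The total coalescence rate `λ_n = Σ_{k=2}^n C(n,k) λ_{n,k}`. -/
noncomputable def totalRate (Λ : Measure ℝ) (n : ℕ) : ℝ :=
  ∑ k ∈ Finset.Icc 2 n, (n.choose k : ℝ) * coalRate Λ n k

/-- The Beta(2-β, β) measure on `[0,1]`, with density
`Γ(2)/(Γ(2-β)Γ(β)) x^{1-β}(1-x)^{β-1}` w.r.t. Lebesgue measure. -/
noncomputable def betaMeasure (β : ℝ) : Measure ℝ :=
  volume.withDensity fun x =>
    Set.indicator (Set.Icc (0:ℝ) 1)
      (fun x => ENNReal.ofReal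
        (Real.Gamma 2 / (Real.Gamma (2 - β) * Real.Gamma β) *
          x ^ ((1 : ℝ) - β) * (1 - x) ^ (β - 1))) x

open Real Set in
lemma key_bernoulli {β : ℝ} (hβ1 : 1 < β) (hβ2 : β < 2) {y : ℝ} (hy : 1 ≤ y) :
    (β - 1) * (y + 1) ^ (-β) ≤ y ^ (1 - β) - (y + 1) ^ (1 - β) := by
  set u : ℝ := β - 1 with hu
  have hu0 : 0 < u := by simp only [hu]; linarith
  have hu1 : u < 1 := by simp only [hu]; linarith
  set t : ℝ := (y + 1)⁻¹ with ht
  have hy1 : (0:ℝ) < y + 1 := by linarith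
  have hyne : (0:ℝ) < y := by linarith
  have ht0 : 0 < t := by positivity
  have ht1 : t < 1 := by rw [ht, inv_lt_one_iff₀]; right; linarith
  have h1t : 1 - t = y / (y + 1) := by rw [ht]; field_simp; ring
  have hBern : (1 - t) ^ u ≤ 1 - u * t := by
    have := rpow_one_add_le_one_add_mul_self (s := -t) (by linarith) hu0.le hu1.le
    rw [← sub_eq_add_neg] at this
    linarith [this]
  have hpos : 0 < (1 - t) ^ u := Real.rpow_pos_of_pos (by linarith) _
  have hkey : 1 + u * t ≤ ((1 - t) ^ u)⁻¹ := by
    rw [← one_div, le_div_iff₀ hpos]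
    nlinarith [mul_pos hu0 ht0]
  -- identity A : (y+1)^(1-β) * t = (y+1)^(-β)
  have hA : (y + 1) ^ (1 - β) * t = (y + 1) ^ (-β) := by
    rw [ht, ← Real.rpow_neg_one (y + 1), ← Real.rpow_add hy1]
    congr 1; ring
  -- identity B : (y+1)^(1-β) * ((1-t)^u)⁻¹ = y^(1-β)
  have hB1 : (1 - t) ^ u = y ^ u * ((y + 1) ^ u)⁻¹ := by
    rw [h1t, Real.div_rpow hyne.le hy1.le, div_eq_mul_inv]
  have e1 : (y + 1) ^ (1 - β) * (y + 1) ^ u = 1 := by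
    have h : (1 - β) + u = 0 := by rw [hu]; ring
    rw [← Real.rpow_add hy1, h, Real.rpow_zero]
  have e2 : y ^ u * y ^ (1 - β) = 1 := by
    have h : u + (1 - β) = 0 := by rw [hu]; ring
    rw [← Real.rpow_add hyne, h, Real.rpow_zero]
  have hyu : 0 < y ^ u := Real.rpow_pos_of_pos hyne _
  have hB : (y + 1) ^ (1 - β) * ((1 - t) ^ u)⁻¹ = y ^ (1 - β) := by
    rw [hB1, mul_inv, inv_inv]
    calc (y + 1) ^ (1 - β) * ((y ^ u)⁻¹ * (y + 1) ^ u)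
        = ((y + 1) ^ (1 - β) * (y + 1) ^ u) * (y ^ u)⁻¹ := by ring
      _ = (y ^ u)⁻¹ := by rw [e1, one_mul]
      _ = y ^ (1 - β) := by
          field_simp
          linarith [e2]
  have hmul := mul_le_mul_of_nonneg_left hkey (Real.rpow_nonneg hy1.le (1 - β))
  rw [hB] at hmul
  have hexp : (y + 1) ^ (1 - β) * (1 + u * t) = (y + 1) ^ (1 - β) + u * (y + 1) ^ (-β) := by
    rw [mul_add, mul_one, ← hA]; ring
  rw [hexp] at hmul
  linarith

open Real Set

section
variable {β : ℝ} (hβ1 : 1 < β) (hβ2 : β < 2)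

noncomputable def cβ (β : ℝ) : ℝ := Real.Gamma 2 / (Real.Gamma (2 - β) * Real.Gamma β)

include hβ1 hβ2 in
lemma cβ_pos : 0 < cβ β := by
  have h1 : 0 < Real.Gamma (2 - β) := Real.Gamma_pos_of_pos (by linarith)
  have h2 : 0 < Real.Gamma β := Real.Gamma_pos_of_pos (by linarith)
  have h3 : 0 < Real.Gamma 2 := Real.Gamma_pos_of_pos (by norm_num)
  exact div_pos h3 (mul_pos h1 h2)

lemma betaMeasure_apply {s : Set ℝ} (hs : MeasurableSet s) :
    betaMeasure β s = ∫⁻ x in s, Set.indicator (Set.Icc (0:ℝ) 1)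
      (fun x => ENNReal.ofReal (cβ β * x ^ ((1 : ℝ) - β) * (1 - x) ^ (β - 1))) x := by
  rw [betaMeasure, withDensity_apply _ hs]; rfl

-- integrability of x ^ (1-β) on Icc 0 a, 0 ≤ a ≤ 1
include hβ1 hβ2 in
lemma rpow_integrableOn {a : ℝ} (ha : 0 ≤ a) :
    IntegrableOn (fun x : ℝ => x ^ ((1:ℝ) - β)) (Icc 0 a) volume := by
  have h := intervalIntegral.intervalIntegrable_rpow' (a := 0) (b := a) (r := 1 - β)
    (by linarith)
  rw [intervalIntegrable_iff_integrableOn_Ioc_of_le ha] at h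
  rwa [integrableOn_Icc_iff_integrableOn_Ioc]

include hβ1 hβ2 in
lemma integral_rpow_Icc {a : ℝ} (ha : 0 ≤ a) :
    ∫ x in Icc (0:ℝ) a, x ^ ((1:ℝ) - β) = a ^ ((2:ℝ) - β) / (2 - β) := by
  rw [MeasureTheory.integral_Icc_eq_integral_Ioc, ← intervalIntegral.integral_of_le ha]
  rw [integral_rpow (Or.inl (by linarith))]
  have h0 : (0:ℝ) ^ ((1:ℝ) - β + 1) = 0 := Real.zero_rpow (by intro h; nlinarith)
  have h1 : (1:ℝ) - β + 1 = 2 - β := by ring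
  rw [h0, h1, sub_zero]

include hβ1 hβ2 in
lemma betaMeasure_finite : betaMeasure β (Icc 0 1) < ⊤ := by
  rw [betaMeasure_apply measurableSet_Icc]
  have hle : ∀ x ∈ Icc (0:ℝ) 1, Set.indicator (Set.Icc (0:ℝ) 1)
      (fun x => ENNReal.ofReal (cβ β * x ^ ((1 : ℝ) - β) * (1 - x) ^ (β - 1))) x
      ≤ ENNReal.ofReal (cβ β * x ^ ((1:ℝ) - β)) := by
    intro x hx
    rw [Set.indicator_of_mem hx]
    apply ENNReal.ofReal_le_ofReal
    have h1 : (1 - x) ^ (β - 1) ≤ 1 :=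
      Real.rpow_le_one (by linarith [hx.2]) (by linarith [hx.1]) (by linarith)
    have h2 : 0 ≤ cβ β * x ^ ((1:ℝ) - β) :=
      mul_nonneg (cβ_pos hβ1 hβ2).le (Real.rpow_nonneg hx.1 _)
    calc cβ β * x ^ ((1:ℝ) - β) * (1 - x) ^ (β - 1) ≤ cβ β * x ^ ((1:ℝ) - β) * 1 :=
          mul_le_mul_of_nonneg_left h1 h2
      _ = _ := mul_one _
  calc ∫⁻ x in Icc (0:ℝ) 1, Set.indicator (Set.Icc (0:ℝ) 1)
        (fun x => ENNReal.ofReal (cβ β * x ^ ((1 : ℝ) - β) * (1 - x) ^ (β - 1))) x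
      ≤ ∫⁻ x in Icc (0:ℝ) 1, ENNReal.ofReal (cβ β * x ^ ((1:ℝ) - β)) := by
        apply setLIntegral_mono' measurableSet_Icc hle
    _ = ENNReal.ofReal (∫ x in Icc (0:ℝ) 1, cβ β * x ^ ((1:ℝ) - β)) := by
        rw [MeasureTheory.ofReal_integral_eq_lintegral_ofReal]
        · exact ((rpow_integrableOn hβ1 hβ2 zero_le_one).const_mul _)
        · refine (ae_restrict_iff' measurableSet_Icc).2 (Filter.Eventually.of_forall ?_)
          intro x hx
          exact mul_nonneg (cβ_pos hβ1 hβ2).le (Real.rpow_nonneg hx.1 _)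
    _ < ⊤ := ENNReal.ofReal_lt_top

include hβ1 hβ2 in
lemma betaMeasure_lower {a : ℝ} (ha : 0 < a) (ha2 : a ≤ 1/2) :
    ENNReal.ofReal (cβ β / 2 * (a ^ ((2:ℝ) - β) / (2 - β))) ≤ betaMeasure β (Icc 0 a) := by
  rw [betaMeasure_apply measurableSet_Icc]
  have hsub : Icc (0:ℝ) a ⊆ Icc (0:ℝ) 1 := Icc_subset_Icc le_rfl (by linarith)
  have hle : ∀ x ∈ Icc (0:ℝ) a, ENNReal.ofReal (cβ β / 2 * x ^ ((1:ℝ) - β))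
      ≤ Set.indicator (Set.Icc (0:ℝ) 1)
        (fun x => ENNReal.ofReal (cβ β * x ^ ((1 : ℝ) - β) * (1 - x) ^ (β - 1))) x := by
    intro x hx
    rw [Set.indicator_of_mem (hsub hx)]
    apply ENNReal.ofReal_le_ofReal
    have hhalf : (1:ℝ)/2 ≤ (1 - x) ^ (β - 1) := by
      have h1 : ((1:ℝ)/2) ^ (β - 1) ≤ (1 - x) ^ (β - 1) :=
        Real.rpow_le_rpow (by norm_num) (by linarith [hx.2]) (by linarith)
      have h2 : ((1:ℝ)/2) ^ (1:ℝ) ≤ ((1:ℝ)/2) ^ (β - 1) :=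
        Real.rpow_le_rpow_of_exponent_ge (by norm_num) (by norm_num) (by linarith)
      rw [Real.rpow_one] at h2
      linarith
    have hx0 : 0 ≤ x ^ ((1:ℝ) - β) := Real.rpow_nonneg hx.1 _
    nlinarith [mul_nonneg (cβ_pos hβ1 hβ2).le hx0]
  calc ENNReal.ofReal (cβ β / 2 * (a ^ ((2:ℝ) - β) / (2 - β)))
      = ∫⁻ x in Icc (0:ℝ) a, ENNReal.ofReal (cβ β / 2 * x ^ ((1:ℝ) - β)) := by
        have hint : ∫ x in Icc (0:ℝ) a, cβ β / 2 * x ^ ((1:ℝ) - β)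
            = cβ β / 2 * (a ^ ((2:ℝ) - β) / (2 - β)) := by
          rw [MeasureTheory.integral_const_mul, integral_rpow_Icc hβ1 hβ2 ha.le]
        rw [← hint, MeasureTheory.ofReal_integral_eq_lintegral_ofReal]
        · exact ((rpow_integrableOn hβ1 hβ2 ha.le).const_mul _)
        · refine (ae_restrict_iff' measurableSet_Icc).2 (Filter.Eventually.of_forall ?_)
          intro x hx
          exact mul_nonneg (by linarith [cβ_pos hβ1 hβ2]) (Real.rpow_nonneg hx.1 _)
    _ ≤ _ := setLIntegral_mono' measurableSet_Icc hle

lemma coalRate_nonneg (Λ : Measure ℝ) (b k : ℕ) : 0 ≤ coalRate Λ b k := by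
  apply setIntegral_nonneg measurableSet_Icc
  intro x hx
  exact mul_nonneg (pow_nonneg hx.1 _) (pow_nonneg (by linarith [hx.2]) _)

include hβ1 hβ2 in
lemma coalRate_two_lower {b : ℕ} (hb : 2 ≤ b) :
    cβ β / (4 * (2 - β)) * ((1 / (2 * (b:ℝ))) ^ ((2:ℝ) - β))
      ≤ coalRate (betaMeasure β) b 2 := by
  have hb0 : (0:ℝ) < (b:ℝ) := by have : 0 < b := lt_of_lt_of_le (by norm_num) hb; exact_mod_cast this
  have hb2 : (2:ℝ) ≤ (b:ℝ) := by exact_mod_cast hb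
  set a : ℝ := 1 / (2 * (b:ℝ)) with ha_def
  have ha : 0 < a := by positivity
  have ha2 : a ≤ 1/2 := by
    rw [ha_def]
    rw [div_le_div_iff₀ (by positivity) (by norm_num)]
    linarith
  have hsub : Icc (0:ℝ) a ⊆ Icc (0:ℝ) 1 := Icc_subset_Icc le_rfl (by linarith)
  have hcoal : coalRate (betaMeasure β) b 2
      = ∫ x in Icc (0:ℝ) 1, (1 - x) ^ (b - 2) ∂(betaMeasure β) := by
    unfold coalRate
    norm_num
  haveI : IsFiniteMeasure ((betaMeasure β).restrict (Icc (0:ℝ) 1)) :=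
    ⟨by rw [Measure.restrict_apply_univ]; exact betaMeasure_finite hβ1 hβ2⟩
  have hInt : IntegrableOn (fun x : ℝ => (1 - x) ^ (b - 2)) (Icc (0:ℝ) 1) (betaMeasure β) := by
    apply Integrable.mono' (integrable_const (1:ℝ))
    · exact ((continuous_const.sub continuous_id).pow _).aestronglyMeasurable
    · refine (ae_restrict_iff' measurableSet_Icc).2 (Filter.Eventually.of_forall ?_)
      intro x hx
      rw [Real.norm_eq_abs, abs_of_nonneg (pow_nonneg (by linarith [hx.2]) _)]
      exact pow_le_one₀ (by linarith [hx.2]) (by linarith [hx.1])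
  have hconst : ∀ x ∈ Icc (0:ℝ) a, (1:ℝ)/2 ≤ (1 - x) ^ (b - 2) := by
    intro x hx
    have hBern := one_add_mul_le_pow (a := -x) (by linarith [hx.2, ha2]) (b - 2)
    have hcast : ((b - 2 : ℕ) : ℝ) ≤ (b:ℝ) := by exact_mod_cast Nat.sub_le b 2
    have hxa : x ≤ a := hx.2
    have hprod : ((b - 2 : ℕ) : ℝ) * x ≤ 1/2 := by
      have h1 : ((b - 2 : ℕ) : ℝ) * x ≤ (b:ℝ) * a :=
        mul_le_mul hcast hxa hx.1 hb0.le
      have h2 : (b:ℝ) * a = 1/2 := by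
        rw [ha_def, mul_one_div, div_eq_div_iff (by positivity) (by norm_num)]
        ring
      linarith
    have : 1 + ((b - 2 : ℕ) : ℝ) * (-x) ≤ (1 + -x) ^ (b - 2) := hBern
    rw [← sub_eq_add_neg] at this
    have h3 : 1 + ((b - 2 : ℕ) : ℝ) * (-x) = 1 - ((b - 2 : ℕ) : ℝ) * x := by ring
    rw [h3] at this
    linarith
  have hmeas_fin : betaMeasure β (Icc (0:ℝ) a) ≠ ⊤ :=
    ((lt_of_le_of_lt (measure_mono hsub) (betaMeasure_finite hβ1 hβ2))).ne
  have step1 : (1:ℝ)/2 * ((betaMeasure β) (Icc (0:ℝ) a)).toReal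
      ≤ ∫ x in Icc (0:ℝ) a, (1 - x) ^ (b - 2) ∂(betaMeasure β) := by
    have h := setIntegral_ge_of_const_le measurableSet_Icc hmeas_fin hconst (hInt.mono_set hsub)
    simp only [smul_eq_mul, measureReal_def] at h
    linarith
  have step2 : ∫ x in Icc (0:ℝ) a, (1 - x) ^ (b - 2) ∂(betaMeasure β)
      ≤ ∫ x in Icc (0:ℝ) 1, (1 - x) ^ (b - 2) ∂(betaMeasure β) := by
    apply setIntegral_mono_set hInt
    · refine (ae_restrict_iff' measurableSet_Icc).2 (Filter.Eventually.of_forall ?_)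
      intro x hx
      exact pow_nonneg (by linarith [hx.2]) _
    · exact HasSubset.Subset.eventuallyLE hsub
  have hr : 0 ≤ cβ β / 2 * (a ^ ((2:ℝ) - β) / (2 - β)) := by
    have hc := cβ_pos hβ1 hβ2
    have hrp : (0:ℝ) ≤ a ^ ((2:ℝ) - β) := Real.rpow_nonneg ha.le _
    apply mul_nonneg (by linarith)
    apply div_nonneg hrp (by linarith)
  have step3 : cβ β / 2 * (a ^ ((2:ℝ) - β) / (2 - β))
      ≤ ((betaMeasure β) (Icc (0:ℝ) a)).toReal := by
    have h := betaMeasure_lower hβ1 hβ2 ha ha2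
    have := ENNReal.toReal_mono hmeas_fin h
    rwa [ENNReal.toReal_ofReal hr] at this
  rw [hcoal]
  calc cβ β / (4 * (2 - β)) * (a ^ ((2:ℝ) - β))
      = 1/2 * (cβ β / 2 * (a ^ ((2:ℝ) - β) / (2 - β))) := by
        field_simp; ring
    _ ≤ 1/2 * ((betaMeasure β) (Icc (0:ℝ) a)).toReal := by linarith
    _ ≤ _ := le_trans step1 step2

include hβ1 hβ2 in
lemma totalRate_lower {b : ℕ} (hb : 2 ≤ b) :
    cβ β / (32 * (2 - β)) * (b:ℝ) ^ β ≤ totalRate (betaMeasure β) b := by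
  have hb0 : (0:ℝ) < (b:ℝ) := by have : 0 < b := lt_of_lt_of_le (by norm_num) hb; exact_mod_cast this
  have hb2 : (2:ℝ) ≤ (b:ℝ) := by exact_mod_cast hb
  have hc3 : 0 < cβ β / (4 * (2 - β)) := by
    have hc := cβ_pos hβ1 hβ2
    apply div_pos hc (by nlinarith)
  set c3 : ℝ := cβ β / (4 * (2 - β)) with hc3_def
  have hchoose : totalRate (betaMeasure β) b ≥ (b.choose 2 : ℝ) * coalRate (betaMeasure β) b 2 := by
    unfold totalRate
    apply Finset.single_le_sum (f := fun k => (b.choose k : ℝ) * coalRate (betaMeasure β) b k)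
    · intro k _
      exact mul_nonneg (Nat.cast_nonneg _) (coalRate_nonneg _ _ _)
    · exact Finset.mem_Icc.2 ⟨le_rfl, hb⟩
  have h1 : (b.choose 2 : ℝ) * (c3 * ((1 / (2 * (b:ℝ))) ^ ((2:ℝ) - β)))
      ≤ (b.choose 2 : ℝ) * coalRate (betaMeasure β) b 2 :=
    mul_le_mul_of_nonneg_left (coalRate_two_lower hβ1 hβ2 hb) (Nat.cast_nonneg _)
  -- rewrite a ^ (2-β) as 2^(β-2) * b^(β-2)
  have ha_eq : (1 / (2 * (b:ℝ))) ^ ((2:ℝ) - β) = (2:ℝ) ^ (β - 2) * (b:ℝ) ^ (β - 2) := by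
    rw [one_div, Real.inv_rpow (by positivity), ← Real.rpow_neg (by positivity),
      show -((2:ℝ) - β) = β - 2 by ring, Real.mul_rpow (by norm_num) hb0.le]
  have h2β : (2:ℝ) - β ≠ 0 := by linarith
  have hsplit : (b:ℝ) ^ β = (b:ℝ) ^ ((2:ℝ)) * (b:ℝ) ^ (β - 2) := by
    rw [show β = 2 + (β - 2) by ring, Real.rpow_add hb0]
    ring_nf
  have hb1 : (b:ℝ) ^ ((2:ℝ)) = (b:ℝ) * (b:ℝ) := by
    rw [show ((2:ℝ)) = ((2:ℕ):ℝ) by norm_num, Real.rpow_natCast]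
    ring
  have hP : 0 < (b:ℝ) ^ (β - 2) := Real.rpow_pos_of_pos hb0 _
  have hQ : (1:ℝ)/2 ≤ (2:ℝ) ^ (β - 2) := by
    have h := Real.rpow_le_rpow_of_exponent_le (by norm_num : (1:ℝ) ≤ 2)
      (by linarith : (-1:ℝ) ≤ β - 2)
    rwa [Real.rpow_neg_one, inv_eq_one_div] at h
  have hKc3 : cβ β / (32 * (2 - β)) = c3 / 8 := by
    rw [hc3_def, div_div]
    congr 1
    ring
  have hch2 : (b.choose 2 : ℝ) = (b:ℝ) * ((b:ℝ) - 1) / 2 := Nat.cast_choose_two ℝ b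
  calc cβ β / (32 * (2 - β)) * (b:ℝ) ^ β
      = c3 / 8 * ((b:ℝ) * (b:ℝ) * (b:ℝ) ^ (β - 2)) := by
        rw [hKc3, hsplit, hb1]
    _ ≤ (b.choose 2 : ℝ) * (c3 * ((2:ℝ) ^ (β - 2) * (b:ℝ) ^ (β - 2))) := by
        rw [hch2]
        nlinarith [mul_nonneg (mul_nonneg hc3.le hP.le)
            (by nlinarith : (0:ℝ) ≤ (b:ℝ) * (b:ℝ) - 2 * (b:ℝ)),
          mul_le_mul_of_nonneg_left hQ (mul_nonneg (mul_nonneg hc3.le hP.le)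
            (by nlinarith : (0:ℝ) ≤ (b:ℝ) * ((b:ℝ) - 1)))]
    _ = (b.choose 2 : ℝ) * (c3 * ((1 / (2 * (b:ℝ))) ^ ((2:ℝ) - β))) := by rw [ha_eq]
    _ ≤ (b.choose 2 : ℝ) * coalRate (betaMeasure β) b 2 := h1
    _ ≤ totalRate (betaMeasure β) b := hchoose
end

lemma totalRate_nonneg (Λ : Measure ℝ) (n : ℕ) : 0 ≤ totalRate Λ n :=
  Finset.sum_nonneg fun k _ => mul_nonneg (Nat.cast_nonneg _) (coalRate_nonneg _ _ _)


/-- For `β ∈ (1,2)`, the Beta(2-β,β)-coalescent satisfies Condition A with `α = β - 1`: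
there is `C > 0` such that `m^{β-1} Σ_{b=m+1}^∞ 1/λ_b ≤ C` for all large `m`. -/
theorem beta_coalescent_conditionA (β : ℝ) (hβ : β ∈ Set.Ioo (1:ℝ) 2) :
    ∃ C : ℝ, 0 < C ∧ ∃ M : ℕ, ∀ m : ℕ, M ≤ m →
      (m : ℝ) ^ (β - 1) * ∑' b : ℕ, 1 / totalRate (betaMeasure β) (m + 1 + b) ≤ C := by
  obtain ⟨hβ1, hβ2⟩ := hβ
  set K : ℝ := cβ β / (32 * (2 - β)) with hK_def
  have hK : 0 < K := by
    have hc := cβ_pos hβ1 hβ2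
    apply div_pos hc (by nlinarith)
  have hKb : 0 < K * (β - 1) := mul_pos hK (by linarith)
  refine ⟨1 / (K * (β - 1)), one_div_pos.2 hKb, 1, ?_⟩
  intro m hm
  set C : ℝ := 1 / (K * (β - 1)) with hC_def
  have hC : 0 < C := one_div_pos.2 hKb
  have hm1 : (1:ℝ) ≤ (m:ℝ) := by exact_mod_cast hm
  have hm0 : (0:ℝ) < (m:ℝ) := by linarith
  set g : ℕ → ℝ := fun i => ((m + i : ℕ) : ℝ) ^ ((1:ℝ) - β) with hg_def
  set f : ℕ → ℝ := fun b => 1 / totalRate (betaMeasure β) (m + 1 + b) with hf_def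
  have hf0 : ∀ b, 0 ≤ f b := fun b => one_div_nonneg.2 (totalRate_nonneg _ _)
  have hterm : ∀ b, f b ≤ C * (g b - g (b + 1)) := by
    intro b
    set y : ℝ := ((m + b : ℕ) : ℝ) with hy_def
    have hy1 : (1:ℝ) ≤ y := by
      rw [hy_def]
      exact_mod_cast le_trans hm (Nat.le_add_right m b)
    have hy0 : (0:ℝ) < y := by linarith
    have hcast1 : ((m + 1 + b : ℕ) : ℝ) = y + 1 := by rw [hy_def]; push_cast; ring
    have hcast2 : g (b + 1) = (y + 1) ^ ((1:ℝ) - β) := by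
      rw [hg_def]
      simp only
      rw [show m + (b + 1) = m + 1 + b by ring, hcast1]
    have hgb : g b = y ^ ((1:ℝ) - β) := rfl
    have hn2 : 2 ≤ m + 1 + b := by omega
    have hlow := totalRate_lower hβ1 hβ2 hn2
    rw [hcast1] at hlow
    have hy1pos : (0:ℝ) < (y + 1) ^ β := Real.rpow_pos_of_pos (by linarith) _
    have hpos : 0 < K * (y + 1) ^ β := mul_pos hK hy1pos
    have h1 : f b ≤ 1 / (K * (y + 1) ^ β) := by
      rw [hf_def]
      exact one_div_le_one_div_of_le hpos hlow
    have hkey := key_bernoulli hβ1 hβ2 hy1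
    have hneg : (y + 1) ^ (-β) = ((y + 1) ^ β)⁻¹ := Real.rpow_neg (by linarith) β
    have h2 : 1 / (K * (y + 1) ^ β) ≤ C * (g b - g (b + 1)) := by
      rw [hgb, hcast2, hC_def]
      rw [one_div, mul_inv, ← hneg]
      rw [one_div, mul_inv]
      have hβ1' : (0:ℝ) < β - 1 := by linarith
      have h3 : (y + 1) ^ (-β) ≤ (y ^ ((1:ℝ) - β) - (y + 1) ^ ((1:ℝ) - β)) / (β - 1) := by
        rw [le_div_iff₀ hβ1']
        calc (y + 1) ^ (-β) * (β - 1) = (β - 1) * (y + 1) ^ (-β) := by ring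
          _ ≤ _ := hkey
      calc K⁻¹ * (y + 1) ^ (-β)
          ≤ K⁻¹ * ((y ^ ((1:ℝ) - β) - (y + 1) ^ ((1:ℝ) - β)) / (β - 1)) :=
            mul_le_mul_of_nonneg_left h3 (by positivity)
        _ = K⁻¹ * (β - 1)⁻¹ * (y ^ ((1:ℝ) - β) - (y + 1) ^ ((1:ℝ) - β)) := by
            ring
    exact le_trans h1 h2
  have hsum : ∀ N : ℕ, ∑ i ∈ Finset.range N, f i ≤ C * (m:ℝ) ^ ((1:ℝ) - β) := by
    intro N
    calc ∑ i ∈ Finset.range N, f i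
        ≤ ∑ i ∈ Finset.range N, C * (g i - g (i + 1)) := Finset.sum_le_sum fun i _ => hterm i
      _ = C * (g 0 - g N) := by rw [← Finset.mul_sum, Finset.sum_range_sub' g]
      _ ≤ C * g 0 := by
          have hgN : 0 ≤ g N := Real.rpow_nonneg (Nat.cast_nonneg _) _
          nlinarith
      _ = C * (m:ℝ) ^ ((1:ℝ) - β) := by rw [hg_def]; norm_num
  have htsum : ∑' b, f b ≤ C * (m:ℝ) ^ ((1:ℝ) - β) := Real.tsum_le_of_sum_range_le hf0 hsum
  calc (m:ℝ) ^ (β - 1) * ∑' b, f b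
      ≤ (m:ℝ) ^ (β - 1) * (C * (m:ℝ) ^ ((1:ℝ) - β)) :=
        mul_le_mul_of_nonneg_left htsum (Real.rpow_nonneg (Nat.cast_nonneg _) _)
    _ = C * ((m:ℝ) ^ (β - 1) * (m:ℝ) ^ ((1:ℝ) - β)) := by ring
    _ = C := by
        rw [← Real.rpow_add hm0, show β - 1 + (1 - β) = 0 by ring, Real.rpow_zero, mul_one]
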